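/- For the Z channel on {0,1}^n with r=1, the vector w' defined by w'_x = (w_H(x)+2)/((w_H(x)+1)(w_H(x)+3)) for x ≠ 0 and w'_0 = 1 is a fractional transversal: for every x ∈ {0,1}^n, Σ_{y ∈ B_{Z,1}(x)} w'_y ≥ 1. -/

import Mathlib

/-- Hamming weight of a binary word. -/
def wH {n : ℕ} (x : Fin n → Bool) : ℕ :=
  (Finset.univ.filter (fun i => x i = true)).card

/-- The Z-channel radius-1 ball `B_{Z,1}(x)`: all `y ≤ x` (componentwise) with
`w_H(x) - w_H(y) ≤ 1`. -/
def ballZ {n : ℕ} (x : Fin n → Bool) : Finset (Fin n → Bool) :=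
  Finset.univ.filter (fun y => (∀ i, y i = true → x i = true) ∧ wH x ≤ wH y + 1)

/-- The improved Z-channel weight: `w'_x = (w_H(x)+2)/((w_H(x)+1)(w_H(x)+3))`
for `x ≠ 0`, and `w'_0 = 1`. -/
noncomputable def wZ {n : ℕ} (x : Fin n → Bool) : ℝ :=
  if x = fun _ => false then 1
  else ((wH x : ℝ) + 2) / (((wH x : ℝ) + 1) * ((wH x : ℝ) + 3))

lemma wH_zero {n : ℕ} : wH (fun _ : Fin n => false) = 0 := by simp [wH]

lemma wZ_nonneg {n : ℕ} (x : Fin n → Bool) : 0 ≤ wZ x := by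
  unfold wZ; split
  · norm_num
  · positivity

lemma mem_ballZ_self {n : ℕ} (x : Fin n → Bool) : x ∈ ballZ x := by
  simp [ballZ]

lemma wH_eq_zero_iff {n : ℕ} (x : Fin n → Bool) :
    wH x = 0 ↔ x = fun _ => false := by
  constructor
  · intro h
    funext i
    by_contra hi
    have hxi : x i = true := by
      cases hxi : x i
      · exact absurd hxi hi
      · rfl
    rw [wH, Finset.card_eq_zero, Finset.filter_eq_empty_iff] at h
    exact h (Finset.mem_univ i) hxi
  · intro h; subst h; exact wH_zero

lemma wH_update {n : ℕ} (x : Fin n → Bool) (i : Fin n) (hi : x i = true) :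
    wH (Function.update x i false) + 1 = wH x := by
  classical
  have h : (Finset.univ.filter (fun j => Function.update x i false j = true))
      = (Finset.univ.filter (fun j => x j = true)).erase i := by
    ext j
    by_cases hj : j = i <;> simp [Function.update_apply, hj]
  unfold wH
  rw [h, Finset.card_erase_add_one (by simp [hi])]

lemma update_mem_ballZ {n : ℕ} (x : Fin n → Bool) (i : Fin n) (hi : x i = true) :
    Function.update x i false ∈ ballZ x := by
  simp only [ballZ, Finset.mem_filter, Finset.mem_univ, true_and]
  constructor
  · intro j hj
    by_cases hji : j = i
    · subst hji; simp [Function.update_apply] at hj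
    · simpa [Function.update_apply, hji] using hj
  · rw [wH_update x i hi]

theorem z_channel_improved_fractional_transversal (n : ℕ) :
    ∀ x : Fin n → Bool, 1 ≤ ∑ y ∈ ballZ x, wZ y := by
  classical
  intro x
  by_cases hx0 : x = fun _ => false
  · have h1 : wZ x = 1 := by simp [wZ, hx0]
    calc (1:ℝ) = wZ x := h1.symm
    _ ≤ ∑ y ∈ ballZ x, wZ y :=
      Finset.single_le_sum (fun y _ => wZ_nonneg y) (mem_ballZ_self x)
  · have hk1 : 1 ≤ wH x := by
      rcases Nat.eq_zero_or_pos (wH x) with h | h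
      · exact absurd ((wH_eq_zero_iff x).mp h) hx0
      · exact h
    rcases eq_or_lt_of_le hk1 with hk1' | hk2
    · -- wH x = 1 : the zero vector is in the ball, contributing 1
      have hz : (fun _ : Fin n => false) ∈ ballZ x := by
        simp only [ballZ, Finset.mem_filter, Finset.mem_univ, true_and]
        refine ⟨fun i hi => by simp at hi, ?_⟩
        rw [wH_zero]; omega
      have h1 : wZ (fun _ : Fin n => false) = 1 := by simp [wZ]
      calc (1:ℝ) = wZ (fun _ : Fin n => false) := h1.symm
      _ ≤ ∑ y ∈ ballZ x, wZ y :=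
        Finset.single_le_sum (fun y _ => wZ_nonneg y) hz
    · -- wH x ≥ 2
      set k := wH x with hk
      set T := Finset.univ.filter (fun i => x i = true) with hT
      have hTcard : T.card = k := rfl
      set S := insert x (T.image (fun i => Function.update x i false)) with hS
      have hsub : S ⊆ ballZ x := by
        intro y hy
        rw [hS, Finset.mem_insert] at hy
        rcases hy with rfl | hy
        · exact mem_ballZ_self _
        · obtain ⟨i, hi, rfl⟩ := Finset.mem_image.mp hy
          rw [hT, Finset.mem_filter] at hi
          exact update_mem_ballZ x i hi.2
      have hxS : x ∉ T.image (fun i => Function.update x i false) := by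
        intro h
        obtain ⟨i, hi, heq⟩ := Finset.mem_image.mp h
        rw [hT, Finset.mem_filter] at hi
        have := congrFun heq i
        rw [Function.update_self] at this
        rw [hi.2] at this
        exact Bool.false_ne_true this
      -- values of wZ on flips
      have hflip : ∀ i ∈ T, wZ (Function.update x i false)
          = ((k : ℝ) + 1) / (((k : ℝ) - 1 + 1) * ((k : ℝ) + 2)) := by
        intro i hi
        rw [hT, Finset.mem_filter] at hi
        have hw : wH (Function.update x i false) + 1 = k := wH_update x i hi.2
        have hne : Function.update x i false ≠ fun _ => false := by
          intro h
          have : wH (Function.update x i false) = 0 := by rw [h]; exact wH_zero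
          omega
        rw [wZ, if_neg hne]
        have : (wH (Function.update x i false) : ℝ) = (k : ℝ) - 1 := by
          have h2 : ((wH (Function.update x i false) : ℝ)) + 1 = (k : ℝ) := by
            exact_mod_cast hw
          linarith
        rw [this]
        ring_nf
      have hinj : ∀ i ∈ T, ∀ j ∈ T,
          Function.update x i false = Function.update x j false → i = j := by
        intro i hi j hj heq
        by_contra hij
        have := congrFun heq i
        rw [Function.update_self, Function.update_apply, if_neg hij] at this
        rw [hT, Finset.mem_filter] at hi
        rw [hi.2] at this
        simp at this
      have hsumS : ∑ y ∈ S, wZ y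
          = wZ x + (k : ℝ) * (((k : ℝ) + 1) / (((k : ℝ) - 1 + 1) * ((k : ℝ) + 2))) := by
        rw [hS, Finset.sum_insert hxS, Finset.sum_image hinj]
        rw [Finset.sum_congr rfl hflip, Finset.sum_const, hTcard, nsmul_eq_mul]
      have hwx : wZ x = ((k : ℝ) + 2) / (((k : ℝ) + 1) * ((k : ℝ) + 3)) := by
        rw [wZ, if_neg hx0]
      have hK : (2 : ℝ) ≤ (k : ℝ) := by exact_mod_cast hk2
      have key : (1 : ℝ) ≤ ∑ y ∈ S, wZ y := by
        rw [hsumS, hwx]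
        set K := (k : ℝ) with hKdef
        have hKpos : (0:ℝ) < K := by linarith
        have heq : K - 1 + 1 = K := by ring
        rw [heq]
        have h2 : K * ((K + 1) / (K * (K + 2))) = (K + 1) / (K + 2) := by
          field_simp
        rw [h2, div_add_div _ _ (by positivity) (by positivity),
          le_div_iff₀ (by positivity)]
        nlinarith
      calc (1:ℝ) ≤ ∑ y ∈ S, wZ y := key
      _ ≤ ∑ y ∈ ballZ x, wZ y :=
        Finset.sum_le_sum_of_subset_of_nonneg hsub (fun y _ _ => wZ_nonneg y)
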